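/- Let ρ₁,…,ρ_N be density matrices on ℂ^D and α₁,…,α_N positive reals with ∑ᵢ αᵢ = 1. Then ∑_{i>j} αᵢαⱼ‖ρᵢ - ρⱼ‖₁² ≤ 8(1 - tr((∑ᵢ αᵢρᵢ)²)) ≤ 8(1 - 1/D). -/

import Mathlib

open Matrix ComplexOrder

/-- The trace norm of a complex matrix: `tr √(AᴴA)`. -/
noncomputable def traceNorm {D : ℕ} (A : Matrix (Fin D) (Fin D) ℂ) : ℝ :=
  (((Matrix.posSemidef_conjTranspose_mul_self A).1.eigenvectorUnitary.1 *
      diagonal (((↑) : ℝ → ℂ) ∘ (√·) ∘ (Matrix.posSemidef_conjTranspose_mul_self A).1.eigenvalues) *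
      (star (Matrix.posSemidef_conjTranspose_mul_self A).1.eigenvectorUnitary :
        Matrix (Fin D) (Fin D) ℂ)).trace).re

namespace Matrix.PosSemidef

/-- The square root of a positive semidefinite matrix (the former Mathlib definition). -/
noncomputable def sqrt {D : ℕ} {A : Matrix (Fin D) (Fin D) ℂ} (hA : A.PosSemidef) :
    Matrix (Fin D) (Fin D) ℂ :=
  hA.1.eigenvectorUnitary.1 * diagonal (((↑) : ℝ → ℂ) ∘ (√·) ∘ hA.1.eigenvalues) *
    (star hA.1.eigenvectorUnitary : Matrix (Fin D) (Fin D) ℂ)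

lemma posSemidef_sqrt {D : ℕ} {A : Matrix (Fin D) (Fin D) ℂ} (hA : A.PosSemidef) :
    hA.sqrt.PosSemidef := by
  have := (Matrix.posSemidef_diagonal_iff.mpr fun i => Complex.zero_le_real.mpr
    (Real.sqrt_nonneg (hA.1.eigenvalues i))).mul_mul_conjTranspose_same
    (hA.1.eigenvectorUnitary.1)
  exact this

lemma sqrt_mul_self {D : ℕ} {A : Matrix (Fin D) (Fin D) ℂ} (hA : A.PosSemidef) :
    hA.sqrt * hA.sqrt = A := by
  have hU : (star hA.1.eigenvectorUnitary : Matrix (Fin D) (Fin D) ℂ) *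
      hA.1.eigenvectorUnitary.1 = 1 := Matrix.mem_unitaryGroup_iff'.mp hA.1.eigenvectorUnitary.2
  conv_rhs => rw [hA.1.spectral_theorem, Unitary.conjStarAlgAut_apply]
  unfold sqrt
  simp only [Matrix.mul_assoc]
  rw [← Matrix.mul_assoc _ (hA.1.eigenvectorUnitary.1), hU, Matrix.one_mul,
    ← Matrix.mul_assoc (diagonal _), diagonal_mul_diagonal]
  congr 3
  funext i
  show ((√(hA.1.eigenvalues i) : ℝ) : ℂ) * ((√(hA.1.eigenvalues i) : ℝ) : ℂ) =
    ((hA.1.eigenvalues i : ℝ) : ℂ)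
  rw [← Complex.ofReal_mul, Real.mul_self_sqrt (hA.eigenvalues_nonneg i)]

open scoped MatrixOrder in
lemma eq_sqrt_of_sq_eq {D : ℕ} {B : Matrix (Fin D) (Fin D) ℂ} (hB : B.PosSemidef)
    (A : Matrix (Fin D) (Fin D) ℂ) {hA : A.PosSemidef} (h : B ^ 2 = A) : B = hA.sqrt := by
  have h1 : CFC.sqrt A = B :=
    (CFC.sqrt_eq_iff A B hA.nonneg hB.nonneg).mpr (by rw [← h, sq])
  have h2 : CFC.sqrt A = hA.sqrt :=
    (CFC.sqrt_eq_iff A hA.sqrt hA.nonneg hA.posSemidef_sqrt.nonneg).mpr hA.sqrt_mul_self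
  rw [← h1, h2]

end Matrix.PosSemidef

section helpers
variable {D : ℕ}

lemma trace_ct_mul (A B : Matrix (Fin D) (Fin D) ℂ) :
    (Aᴴ * B).trace = ∑ p : Fin D × Fin D, (starRingEnd ℂ) (A p.1 p.2) * B p.1 p.2 := by
  rw [Matrix.trace, Fintype.sum_prod_type]
  simp only [Matrix.diag, Matrix.mul_apply, Matrix.conjTranspose_apply]
  rw [Finset.sum_comm]
  simp [mul_comm]

lemma trace_ct_mul_self_re (A : Matrix (Fin D) (Fin D) ℂ) :
    ((Aᴴ * A).trace).re = ∑ p : Fin D × Fin D, Complex.normSq (A p.1 p.2) := by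
  rw [trace_ct_mul, Complex.re_sum]
  refine Finset.sum_congr rfl fun p _ => ?_
  rw [← Complex.normSq_eq_conj_mul_self, Complex.ofReal_re]

lemma trace_ct_mul_self_re_nonneg (A : Matrix (Fin D) (Fin D) ℂ) :
    0 ≤ ((Aᴴ * A).trace).re := by
  rw [trace_ct_mul_self_re]
  exact Finset.sum_nonneg fun p _ => Complex.normSq_nonneg _

/-- Cauchy–Schwarz for the trace inner product. -/
lemma trace_cs (A B : Matrix (Fin D) (Fin D) ℂ) :
    ‖(Aᴴ * B).trace‖ ≤
      Real.sqrt ((Aᴴ * A).trace).re * Real.sqrt ((Bᴴ * B).trace).re := by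
  classical
  let x : EuclideanSpace ℂ (Fin D × Fin D) := WithLp.toLp 2 (fun p : Fin D × Fin D => A p.1 p.2)
  let y : EuclideanSpace ℂ (Fin D × Fin D) := WithLp.toLp 2 (fun p : Fin D × Fin D => B p.1 p.2)
  have hinner : (inner ℂ x y : ℂ) = (Aᴴ * B).trace := by
    rw [trace_ct_mul]
    simp [x, y, PiLp.inner_apply, RCLike.inner_apply, mul_comm]
  have hx : ‖x‖ = Real.sqrt ((Aᴴ * A).trace).re := by
    rw [EuclideanSpace.norm_eq, trace_ct_mul_self_re]
    congr 1
    refine Finset.sum_congr rfl fun p _ => ?_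
    simp [x, Complex.sq_norm]
  have hy : ‖y‖ = Real.sqrt ((Bᴴ * B).trace).re := by
    rw [EuclideanSpace.norm_eq, trace_ct_mul_self_re]
    congr 1
    refine Finset.sum_congr rfl fun p _ => ?_
    simp [y, Complex.sq_norm]
  calc ‖(Aᴴ * B).trace‖ = ‖(inner ℂ x y : ℂ)‖ := by rw [hinner]
    _ ≤ ‖x‖ * ‖y‖ := norm_inner_le_norm x y
    _ = _ := by rw [hx, hy]

lemma trace_mul_psd_nonneg {M N : Matrix (Fin D) (Fin D) ℂ}
    (hM : M.PosSemidef) (hN : N.PosSemidef) : 0 ≤ ((M * N).trace).re := by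
  have key : (M * N).trace = ((hM.sqrt * hN.sqrt)ᴴ * (hM.sqrt * hN.sqrt)).trace := by
    rw [Matrix.conjTranspose_mul, hM.posSemidef_sqrt.1, hN.posSemidef_sqrt.1]
    rw [show hN.sqrt * hM.sqrt * (hM.sqrt * hN.sqrt)
        = hN.sqrt * (hM.sqrt * hM.sqrt * hN.sqrt) by simp only [Matrix.mul_assoc],
      hM.sqrt_mul_self, Matrix.trace_mul_comm hN.sqrt, Matrix.mul_assoc, hN.sqrt_mul_self]
  rw [key]
  exact trace_ct_mul_self_re_nonneg _

lemma abs_trace_PBC_le {P B C : Matrix (Fin D) (Fin D) ℂ}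
    (hP : P.IsHermitian) (hB : B.PosSemidef) (hC : C.PosSemidef)
    (hXX : ((P * B * P * C).trace).re ≤ 1) :
    ‖(P * B * C).trace‖ ≤ Real.sqrt (((B * C).trace).re) := by
  set R := hB.sqrt with hR
  set S := hC.sqrt with hS
  have hRh : Rᴴ = R := hB.posSemidef_sqrt.1
  have hSh : Sᴴ = S := hC.posSemidef_sqrt.1
  set X := R * P * S with hXdef
  set Y := R * S with hYdef
  have hXct : Xᴴ = S * P * R := by
    rw [hXdef, Matrix.conjTranspose_mul, Matrix.conjTranspose_mul, hRh, hSh, hP.eq,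
      Matrix.mul_assoc]
  have e1 : (Xᴴ * Y).trace = (P * B * C).trace := by
    rw [hXct, hYdef]
    rw [show S * P * R * (R * S) = S * (P * (R * R) * S) by simp only [Matrix.mul_assoc],
      Matrix.trace_mul_comm, hB.sqrt_mul_self]
    rw [show P * B * S * S = P * B * (S * S) by simp only [Matrix.mul_assoc],
      hC.sqrt_mul_self]
  have e2 : (Yᴴ * Y).trace = (B * C).trace := by
    rw [hYdef, Matrix.conjTranspose_mul, hRh, hSh]
    rw [show S * R * (R * S) = S * (R * R * S) by simp only [Matrix.mul_assoc],
      Matrix.trace_mul_comm, hB.sqrt_mul_self, Matrix.mul_assoc, hC.sqrt_mul_self]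
  have e3 : (Xᴴ * X).trace = (P * B * P * C).trace := by
    rw [hXct, hXdef]
    rw [show S * P * R * (R * P * S) = S * (P * (R * R) * P * S) by
        simp only [Matrix.mul_assoc],
      Matrix.trace_mul_comm, hB.sqrt_mul_self]
    rw [show P * B * P * S * S = P * B * P * (S * S) by simp only [Matrix.mul_assoc],
      hC.sqrt_mul_self]
  calc ‖(P * B * C).trace‖ = ‖(Xᴴ * Y).trace‖ := by rw [e1]
    _ ≤ Real.sqrt ((Xᴴ * X).trace).re * Real.sqrt ((Yᴴ * Y).trace).re := trace_cs X Y
    _ ≤ 1 * Real.sqrt ((Yᴴ * Y).trace).re := by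
        apply mul_le_mul_of_nonneg_right _ (Real.sqrt_nonneg _)
        rw [e3]
        exact Real.sqrt_le_one.mpr hXX
    _ = Real.sqrt (((B * C).trace).re) := by rw [one_mul, e2]

end helpers

noncomputable def cd {D : ℕ} (U : Matrix (Fin D) (Fin D) ℂ) (d : Fin D → ℝ) :
    Matrix (Fin D) (Fin D) ℂ :=
  U * Matrix.diagonal (fun i => (d i : ℂ)) * Uᴴ

section cdlem
variable {D : ℕ} {U : Matrix (Fin D) (Fin D) ℂ}

lemma cd_mul (hU : Uᴴ * U = 1) (d e : Fin D → ℝ) :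
    cd U d * cd U e = cd U (fun i => d i * e i) := by
  unfold cd
  simp only [Matrix.mul_assoc]
  rw [← Matrix.mul_assoc Uᴴ U, hU, Matrix.one_mul, ← Matrix.mul_assoc _ _ Uᴴ,
    diagonal_mul_diagonal]
  simp [Matrix.mul_assoc]

lemma cd_trace (hU : Uᴴ * U = 1) (d : Fin D → ℝ) : (cd U d).trace = ∑ i, (d i : ℂ) := by
  unfold cd
  rw [Matrix.trace_mul_cycle, hU, Matrix.one_mul, Matrix.trace_diagonal]

lemma cd_psd {d : Fin D → ℝ} (hd : ∀ i, 0 ≤ d i) : (cd U d).PosSemidef :=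
  (Matrix.posSemidef_diagonal_iff.mpr fun i =>
    Complex.zero_le_real.mpr (hd i)).mul_mul_conjTranspose_same U

lemma cd_one (hU' : U * Uᴴ = 1) : cd U (fun _ => 1) = 1 := by
  unfold cd; simp [hU']

lemma cd_sub (d e : Fin D → ℝ) : cd U d - cd U e = cd U (fun i => d i - e i) := by
  unfold cd
  rw [← Matrix.sub_mul, ← Matrix.mul_sub, diagonal_sub]
  congr 1
  congr 1
  ext i
  push_cast
  ring

lemma cd_one_sub (hU' : U * Uᴴ = 1) (d : Fin D → ℝ) :
    1 - cd U d = cd U (fun i => 1 - d i) := by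
  rw [← cd_one hU', cd_sub]

end cdlem

section spec
variable {D : ℕ} {A : Matrix (Fin D) (Fin D) ℂ}

lemma star_coe_unitary (hA : A.IsHermitian) :
    ((hA.eigenvectorUnitary : Matrix (Fin D) (Fin D) ℂ))ᴴ * hA.eigenvectorUnitary = 1 := by
  rw [← Matrix.star_eq_conjTranspose]
  exact Matrix.mem_unitaryGroup_iff'.mp hA.eigenvectorUnitary.2

lemma coe_unitary_star (hA : A.IsHermitian) :
    (hA.eigenvectorUnitary : Matrix (Fin D) (Fin D) ℂ) *
      (hA.eigenvectorUnitary : Matrix (Fin D) (Fin D) ℂ)ᴴ = 1 := by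
  rw [← Matrix.star_eq_conjTranspose]
  exact Matrix.mem_unitaryGroup_iff.mp hA.eigenvectorUnitary.2

lemma spectral_cd (hA : A.IsHermitian) : A = cd hA.eigenvectorUnitary hA.eigenvalues := by
  rw [cd, ← Matrix.star_eq_conjTranspose]
  exact hA.spectral_theorem

lemma trace_eq_sum_eigenvalues (hA : A.IsHermitian) :
    A.trace = ∑ i, (hA.eigenvalues i : ℂ) := by
  conv_lhs => rw [spectral_cd hA]
  exact cd_trace (star_coe_unitary hA) _

lemma traceNorm_herm (hA : A.IsHermitian) :
    traceNorm A = ∑ i, |hA.eigenvalues i| := by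
  set U : Matrix (Fin D) (Fin D) ℂ := (hA.eigenvectorUnitary : Matrix (Fin D) (Fin D) ℂ)
  have hU : Uᴴ * U = 1 := star_coe_unitary hA
  set B := cd U (fun i => |hA.eigenvalues i|) with hBdef
  have hB : B.PosSemidef := cd_psd fun i => abs_nonneg _
  have hsq : B ^ 2 = Aᴴ * A := by
    rw [hA.eq, pow_two, hBdef, cd_mul hU]
    conv_rhs => rw [spectral_cd hA, cd_mul hU]
    have : (fun i => |hA.eigenvalues i| * |hA.eigenvalues i|)
        = fun i => hA.eigenvalues i * hA.eigenvalues i :=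
      funext fun i => abs_mul_abs_self _
    rw [this]
  have : B = (Matrix.posSemidef_conjTranspose_mul_self A).sqrt :=
    hB.eq_sqrt_of_sq_eq _ hsq
  rw [show traceNorm A = ((Matrix.posSemidef_conjTranspose_mul_self A).sqrt.trace).re from rfl,
    ← this, hBdef, cd_trace hU, Complex.re_sum]
  simp

lemma one_sub_psd (hσ : A.PosSemidef) (ht : A.trace = 1) : (1 - A).PosSemidef := by
  have h1 := spectral_cd hσ.1
  have hsum : ∑ i, hσ.1.eigenvalues i = 1 := by
    have h2 := trace_eq_sum_eigenvalues hσ.1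
    rw [ht] at h2
    have := congrArg Complex.re h2.symm
    simpa [Complex.re_sum] using this
  have hle : ∀ i, hσ.1.eigenvalues i ≤ 1 := by
    intro i
    rw [← hsum]
    exact Finset.single_le_sum (f := fun i => hσ.1.eigenvalues i)
      (fun j _ => hσ.eigenvalues_nonneg j) (Finset.mem_univ i)
  rw [show (1 - A : Matrix (Fin D) (Fin D) ℂ)
      = 1 - cd hσ.1.eigenvectorUnitary hσ.1.eigenvalues by rw [← h1]]
  rw [cd_one_sub (coe_unitary_star hσ.1)]
  exact cd_psd fun i => by linarith [hle i]

end spec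

/-- The key per-pair bound: `‖ρ − σ‖₁² ≤ 16 (1 − Re tr ρσ)`. -/
lemma key_pair {D : ℕ} {ρ σ : Matrix (Fin D) (Fin D) ℂ}
    (hρ : ρ.PosSemidef) (hσ : σ.PosSemidef)
    (hρt : ρ.trace = 1) (hσt : σ.trace = 1) :
    traceNorm (ρ - σ) ^ 2 ≤ 16 * (1 - ((ρ * σ).trace).re) := by
  have hA : (ρ - σ).IsHermitian := hρ.1.sub hσ.1
  set U : Matrix (Fin D) (Fin D) ℂ := (hA.eigenvectorUnitary : Matrix (Fin D) (Fin D) ℂ)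
    with hUdef
  have hU : Uᴴ * U = 1 := star_coe_unitary hA
  have hU' : U * Uᴴ = 1 := coe_unitary_star hA
  set E : Fin D → ℝ := hA.eigenvalues with hEdef
  set ind : Fin D → ℝ := fun i => if 0 < E i then 1 else 0 with hinddef
  set P := cd U ind with hPdef
  have hPP : P * P = P := by
    have hii : (fun i => ind i * ind i) = ind :=
      funext fun i => by by_cases h : 0 < E i <;> simp [hinddef, h]
    rw [hPdef, cd_mul hU, hii]
  have hPpsd : P.PosSemidef := cd_psd fun i => by
    by_cases h : 0 < E i <;> simp [hinddef, h]
  have h1P : (1 - P).PosSemidef := by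
    rw [hPdef, cd_one_sub hU']
    refine cd_psd fun i => ?_
    by_cases h : 0 < E i <;> simp [hinddef, h]
  have hEsum : ∑ i, E i = 0 := by
    have h2 := trace_eq_sum_eigenvalues hA
    rw [Matrix.trace_sub, hρt, hσt, sub_self] at h2
    have := congrArg Complex.re h2.symm
    simpa [Complex.re_sum] using this
  set pos := ∑ i, ind i * E i with hposdef
  have hpos0 : 0 ≤ pos := Finset.sum_nonneg fun i _ => by
    by_cases h : 0 < E i
    · simp only [hinddef, if_pos h, one_mul]
      exact le_of_lt h
    · simp [hinddef, if_neg h]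
  have htn : traceNorm (ρ - σ) = 2 * pos := by
    rw [traceNorm_herm hA]
    have : ∀ i, |E i| = 2 * (ind i * E i) - E i := by
      intro i
      by_cases h : 0 < E i
      · rw [abs_of_pos h, show ind i = 1 from if_pos h]; ring
      · push_neg at h
        rw [abs_of_nonpos h, show ind i = 0 from if_neg (not_lt.mpr h)]; ring
    calc ∑ i, |hA.eigenvalues i| = ∑ i, (2 * (ind i * E i) - E i) :=
          Finset.sum_congr rfl fun i _ => this i
      _ = 2 * pos - ∑ i, E i := by rw [Finset.sum_sub_distrib, ← Finset.mul_sum]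
      _ = 2 * pos := by rw [hEsum, sub_zero]
  have hPA : ((P * (ρ - σ)).trace) = (pos : ℂ) := by
    conv_lhs => rw [spectral_cd hA]
    rw [hPdef, cd_mul hU, cd_trace hU, hposdef]
    push_cast
    rfl
  set t := ((ρ * σ).trace).re with htdef
  have h1σ : (1 - σ).PosSemidef := one_sub_psd hσ hσt
  have h1ρ : (1 - ρ).PosSemidef := one_sub_psd hρ hρt
  have hT1T2 : (P * (ρ - σ)).trace
      = (P * ρ * (1 - σ)).trace - (P * (1 - ρ) * σ).trace := by
    rw [← Matrix.trace_sub]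
    congr 1
    noncomm_ring
  have hPρ : ((P * ρ).trace).re ≤ 1 := by
    have h0 : 0 ≤ (((1 - P) * ρ).trace).re := trace_mul_psd_nonneg h1P hρ
    have he : (1 - P) * ρ = ρ - P * ρ := by noncomm_ring
    rw [he, Matrix.trace_sub, Complex.sub_re, hρt, Complex.one_re] at h0
    linarith
  have hPσ : ((P * σ).trace).re ≤ 1 := by
    have h0 : 0 ≤ (((1 - P) * σ).trace).re := trace_mul_psd_nonneg h1P hσ
    have he : (1 - P) * σ = σ - P * σ := by noncomm_ring
    rw [he, Matrix.trace_sub, Complex.sub_re, hσt, Complex.one_re] at h0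
    linarith
  have hPρP : (P * ρ * P).PosSemidef := by
    have := hρ.mul_mul_conjTranspose_same P
    rwa [hPpsd.1] at this
  have hPρPσ : 0 ≤ ((P * ρ * P * σ).trace).re := trace_mul_psd_nonneg hPρP hσ
  have htrPρP : (P * ρ * P).trace = (P * ρ).trace := by
    rw [Matrix.trace_mul_cycle, hPP]
  have hXX1 : ((P * ρ * P * (1 - σ)).trace).re ≤ 1 := by
    have he : P * ρ * P * (1 - σ) = P * ρ * P - P * ρ * P * σ := by noncomm_ring
    rw [he, Matrix.trace_sub, Complex.sub_re, htrPρP]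
    linarith
  have hXX2 : ((P * (1 - ρ) * P * σ).trace).re ≤ 1 := by
    have he : P * (1 - ρ) * P * σ = P * P * σ - P * ρ * P * σ := by noncomm_ring
    rw [he, hPP, Matrix.trace_sub, Complex.sub_re]
    linarith
  have hb1 := abs_trace_PBC_le hPpsd.1 hρ h1σ hXX1
  have hb2 := abs_trace_PBC_le hPpsd.1 h1ρ hσ hXX2
  have hρ1σ : ((ρ * (1 - σ)).trace).re = 1 - t := by
    have he : ρ * (1 - σ) = ρ - ρ * σ := by noncomm_ring
    rw [he, Matrix.trace_sub, Complex.sub_re, hρt]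
    simp [htdef]
  have h1ρσ : (((1 - ρ) * σ).trace).re = 1 - t := by
    have he : (1 - ρ) * σ = σ - ρ * σ := by noncomm_ring
    rw [he, Matrix.trace_sub, Complex.sub_re, hσt]
    simp [htdef]
  have ht1 : 0 ≤ 1 - t := by
    rw [← hρ1σ]
    exact trace_mul_psd_nonneg hρ h1σ
  rw [hρ1σ] at hb1
  rw [h1ρσ] at hb2
  have hposle : pos ≤ 2 * Real.sqrt (1 - t) := by
    have hre : pos = ((P * (ρ - σ)).trace).re := by rw [hPA, Complex.ofReal_re]
    have h1 : ((P * ρ * (1 - σ)).trace).re ≤ ‖(P * ρ * (1 - σ)).trace‖ :=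
      Complex.re_le_norm _
    have h2 : -‖(P * (1 - ρ) * σ).trace‖ ≤ ((P * (1 - ρ) * σ).trace).re := by
      have := Complex.abs_re_le_norm ((P * (1 - ρ) * σ).trace)
      have := neg_abs_le (((P * (1 - ρ) * σ).trace).re)
      linarith [abs_le.mp (le_refl |((P * (1 - ρ) * σ).trace).re|)]
    have : pos = ((P * ρ * (1 - σ)).trace).re - ((P * (1 - ρ) * σ).trace).re := by
      rw [hre, hT1T2, Complex.sub_re]
    linarith
  rw [htn]
  have h2 : 2 * pos ≤ 4 * Real.sqrt (1 - t) := by linarith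
  calc (2 * pos) ^ 2 ≤ (4 * Real.sqrt (1 - t)) ^ 2 := by
        apply pow_le_pow_left₀ (by linarith) h2
    _ = 16 * (1 - t) := by rw [mul_pow, Real.sq_sqrt ht1]; ring

theorem stmt_3 {D N : ℕ} (ρ : Fin N → Matrix (Fin D) (Fin D) ℂ) (α : Fin N → ℝ)
    (hρ : ∀ i, (ρ i).PosSemidef) (htr : ∀ i, (ρ i).trace = 1)
    (hα : ∀ i, 0 < α i) (hsum : ∑ i, α i = 1) :
    (∑ i, ∑ j ∈ Finset.univ.filter (fun j => j < i),
        α i * α j * traceNorm (ρ i - ρ j) ^ 2)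
      ≤ 8 * (1 - (((∑ i, (α i : ℂ) • ρ i) * (∑ i, (α i : ℂ) • ρ i)).trace).re)
    ∧ 8 * (1 - (((∑ i, (α i : ℂ) • ρ i) * (∑ i, (α i : ℂ) • ρ i)).trace).re)
      ≤ 8 * (1 - 1 / (D : ℝ)) := by
  classical
  rcases Nat.eq_zero_or_pos N with hN | hN
  · subst hN; simp at hsum
  rcases Nat.eq_zero_or_pos D with hD | hD
  · exfalso
    have h0 := htr ⟨0, hN⟩
    subst hD
    rw [show (ρ ⟨0, hN⟩).trace = 0 from by simp [Matrix.trace]] at h0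
    exact zero_ne_one h0
  set ρb : Matrix (Fin D) (Fin D) ℂ := ∑ i, (α i : ℂ) • ρ i with hρb
  set T : ℝ := ((ρb * ρb).trace).re with hT
  set t : Fin N → Fin N → ℝ := fun i j => (((ρ i) * (ρ j)).trace).re with htdef
  have hts : ∀ i j, t i j = t j i := fun i j => by
    simp only [htdef]; rw [Matrix.trace_mul_comm]
  have ht1 : ∀ i j, t i j ≤ 1 := by
    intro i j
    have h0 : 0 ≤ ((ρ i * (1 - ρ j)).trace).re :=
      trace_mul_psd_nonneg (hρ i) (one_sub_psd (hρ j) (htr j))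
    have he : ρ i * (1 - ρ j) = ρ i - ρ i * ρ j := by noncomm_ring
    rw [he, Matrix.trace_sub, Complex.sub_re, htr i, Complex.one_re] at h0
    simp only [htdef]
    linarith
  set F : Fin N → Fin N → ℝ := fun i j => α i * α j * (1 - t i j) with hFdef
  have hF0 : ∀ i j, 0 ≤ F i j := fun i j =>
    mul_nonneg (mul_nonneg (hα i).le (hα j).le) (by linarith [ht1 i j])
  have hFsymm : ∀ i j, F i j = F j i := fun i j => by
    simp only [hFdef]; rw [hts]; ring
  -- expansion of T
  have hexp : ρb * ρb = ∑ i, ∑ j, ((α i : ℂ) * (α j : ℂ)) • (ρ i * ρ j) := by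
    rw [hρb]
    simp only [Finset.sum_mul, smul_mul_assoc, Finset.mul_sum, Finset.smul_sum, mul_smul_comm,
      smul_smul]
    rw [Finset.sum_comm]
    exact Finset.sum_congr rfl fun i _ => Finset.sum_congr rfl fun j _ => by rw [mul_comm]
  have hTeq : T = ∑ i, ∑ j, α i * α j * t i j := by
    rw [hT, hexp, Matrix.trace_sum, Complex.re_sum]
    refine Finset.sum_congr rfl fun i _ => ?_
    rw [Matrix.trace_sum, Complex.re_sum]
    refine Finset.sum_congr rfl fun j _ => ?_
    rw [Matrix.trace_smul, smul_eq_mul, ← Complex.ofReal_mul, Complex.re_ofReal_mul]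
  have hone : (1 : ℝ) = ∑ i, ∑ j : Fin N, α i * α j := by
    rw [← Finset.sum_mul_sum, hsum, one_mul]
  have hsub : 1 - T = ∑ i, ∑ j, F i j := by
    simp only [hFdef, mul_sub, mul_one, Finset.sum_sub_distrib]
    rw [← hone, ← hTeq]
  -- first inequality
  have hswap : ∑ i, ∑ j ∈ Finset.univ.filter (fun j => i < j), F i j
      = ∑ i, ∑ j ∈ Finset.univ.filter (fun j => j < i), F i j := by
    simp only [Finset.sum_filter]
    rw [Finset.sum_comm]
    refine Finset.sum_congr rfl fun i _ => Finset.sum_congr rfl fun j _ => ?_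
    by_cases h : j < i <;> simp [h, hFsymm i j]
  have hdouble : 2 * (∑ i, ∑ j ∈ Finset.univ.filter (fun j => j < i), F i j)
      ≤ ∑ i, ∑ j, F i j := by
    have hsplit : ∑ i, ∑ j, F i j
        = (∑ i, ∑ j ∈ Finset.univ.filter (fun j => j < i), F i j)
          + ∑ i, ∑ j ∈ Finset.univ.filter (fun j => ¬ j < i), F i j := by
      rw [← Finset.sum_add_distrib]
      exact Finset.sum_congr rfl fun i _ =>
        (Finset.sum_filter_add_sum_filter_not _ _ _).symm
    have hge : ∑ i, ∑ j ∈ Finset.univ.filter (fun j => i < j), F i j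
        ≤ ∑ i, ∑ j ∈ Finset.univ.filter (fun j => ¬ j < i), F i j := by
      refine Finset.sum_le_sum fun i _ => ?_
      refine Finset.sum_le_sum_of_subset_of_nonneg ?_ fun j _ _ => hF0 i j
      intro j hj
      simp only [Finset.mem_filter, Finset.mem_univ, true_and] at hj ⊢
      exact asymm hj
    rw [hsplit]
    linarith [hswap]
  have hfirst : (∑ i, ∑ j ∈ Finset.univ.filter (fun j => j < i),
      α i * α j * traceNorm (ρ i - ρ j) ^ 2) ≤ 8 * (1 - T) := by
    have step1 : (∑ i, ∑ j ∈ Finset.univ.filter (fun j => j < i),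
        α i * α j * traceNorm (ρ i - ρ j) ^ 2)
        ≤ ∑ i, ∑ j ∈ Finset.univ.filter (fun j => j < i), 16 * F i j := by
      refine Finset.sum_le_sum fun i _ => Finset.sum_le_sum fun j _ => ?_
      have hk := key_pair (hρ i) (hρ j) (htr i) (htr j)
      have : α i * α j * traceNorm (ρ i - ρ j) ^ 2
          ≤ α i * α j * (16 * (1 - t i j)) := by
        apply mul_le_mul_of_nonneg_left _ (mul_nonneg (hα i).le (hα j).le)
        exact hk
      calc α i * α j * traceNorm (ρ i - ρ j) ^ 2
          ≤ α i * α j * (16 * (1 - t i j)) := this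
        _ = 16 * F i j := by simp only [hFdef]; ring
    have step2 : ∑ i, ∑ j ∈ Finset.univ.filter (fun j => j < i), 16 * F i j
        = 16 * ∑ i, ∑ j ∈ Finset.univ.filter (fun j => j < i), F i j := by
      simp [Finset.mul_sum]
    rw [hsub]
    calc (∑ i, ∑ j ∈ Finset.univ.filter (fun j => j < i),
        α i * α j * traceNorm (ρ i - ρ j) ^ 2)
        ≤ 16 * ∑ i, ∑ j ∈ Finset.univ.filter (fun j => j < i), F i j := by
          rw [← step2]; exact step1
      _ ≤ 8 * ∑ i, ∑ j, F i j := by linarith [hdouble]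
  -- second inequality
  have hbarH : ρbᴴ = ρb := by
    rw [hρb, Matrix.conjTranspose_sum]
    refine Finset.sum_congr rfl fun i _ => ?_
    rw [Matrix.conjTranspose_smul, (hρ i).1.eq, Complex.star_def, Complex.conj_ofReal]
  have hbart : ρb.trace = 1 := by
    rw [hρb, Matrix.trace_sum]
    simp only [Matrix.trace_smul, htr, smul_eq_mul, mul_one]
    rw [← Complex.ofReal_sum, hsum, Complex.ofReal_one]
  have hT0 : 0 ≤ T := by
    have := trace_ct_mul_self_re_nonneg ρb
    rwa [hbarH] at this
  have hcs := trace_cs (1 : Matrix (Fin D) (Fin D) ℂ) ρb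
  rw [Matrix.conjTranspose_one, Matrix.one_mul, Matrix.one_mul, hbarH, hbart,
    Matrix.trace_one] at hcs
  simp only [norm_one] at hcs
  have hcs' : (1 : ℝ) ≤ Real.sqrt D * Real.sqrt T := by
    convert hcs using 3
    simp
  have hDT : (1 : ℝ) ≤ D * T := by
    have := pow_le_pow_left₀ (by norm_num) hcs' 2
    rw [one_pow, mul_pow, Real.sq_sqrt (by positivity), Real.sq_sqrt hT0] at this
    exact this
  have hsecond : 8 * (1 - T) ≤ 8 * (1 - 1 / (D : ℝ)) := by
    have hDpos : (0 : ℝ) < D := by exact_mod_cast hD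
    have : 1 / (D : ℝ) ≤ T := by
      rw [div_le_iff₀ hDpos]
      linarith [hDT]
    linarith
  exact ⟨hfirst, hsecond⟩
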